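/- arXiv:1708.00825 — 3 statements merged into one kernel-verified Lean document; each statement's English description precedes it below -/
import Mathlib

section
/- If N is a normal subgroup of a finite group G, then λ(G/N) ≤ λ(G) ≤ λ(G/N) + λ(N), where λ denotes the depth. -/
/-- An unrefinable chain of length `t`: a descending chain of subgroups from `⊤` to `⊥`
in which each term is a maximal subgroup of the previous one. -/
def IsUnrefinableChain {G : Type*} [Group G] {t : ℕ} (s : Fin (t + 1) → Subgroup G) : Prop :=
  s 0 = ⊤ ∧ s (Fin.last t) = ⊥ ∧ ∀ i : Fin t, s i.succ ⋖ s i.castSucc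

/-- The depth `λ(G)`: the minimal length of an unrefinable chain from `G` to `1`. -/
noncomputable def groupDepth (G : Type*) [Group G] : ℕ :=
  sInf {t | ∃ s : Fin (t + 1) → Subgroup G, IsUnrefinableChain s}

/-- The length `l(G)`: the maximal length of a strictly descending chain of subgroups
from `G` to `1`. -/
noncomputable def groupLength (G : Type*) [Group G] : ℕ :=
  sSup {t | ∃ s : Fin (t + 1) → Subgroup G,
    s 0 = ⊤ ∧ s (Fin.last t) = ⊥ ∧ ∀ i : Fin t, s i.succ < s i.castSucc}

/-- `Ω n`: the number of prime factors of `n` counted with multiplicity. -/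
def Omega (n : ℕ) : ℕ := (Nat.primeFactorsList n).length

namespace DepthAux

variable {α β : Type*} [PartialOrder α] [PartialOrder β]

/-- A descending covering chain of length `t` from `x` to `y`. -/
def CovChain (t : ℕ) (x y : α) : Prop :=
  ∃ s : Fin (t + 1) → α, s 0 = x ∧ s (Fin.last t) = y ∧ ∀ i : Fin t, s i.succ ⋖ s i.castSucc

theorem covChain_zero_iff {x y : α} : CovChain 0 x y ↔ x = y := by
  constructor
  · rintro ⟨s, h0, hl, -⟩
    rw [← h0, ← hl]; rfl
  · rintro rfl
    exact ⟨fun _ => x, rfl, rfl, fun i => i.elim0⟩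

theorem covChain_tail {t : ℕ} {x y : α} (h : CovChain (t + 1) x y) :
    ∃ x', x' ⋖ x ∧ CovChain t x' y := by
  obtain ⟨s, h0, hl, hc⟩ := h
  refine ⟨s 1, ?_, s ∘ Fin.succ, ?_, ?_, ?_⟩
  · have := hc 0
    simpa [Fin.succ_zero_eq_one, h0] using this
  · simp [Function.comp, Fin.succ_zero_eq_one]
  · simp only [Function.comp, Fin.succ_last, hl]
  · intro i
    have := hc i.succ
    simpa only [Function.comp_apply, Fin.succ_castSucc] using this

theorem covChain_cons {t : ℕ} {x x' y : α} (hx : x' ⋖ x) (h : CovChain t x' y) :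
    CovChain (t + 1) x y := by
  obtain ⟨s, h0, hl, hc⟩ := h
  refine ⟨Fin.cases x s, by simp, ?_, ?_⟩
  · show Fin.cases (motive := fun _ => α) x s (Fin.last t).succ = y
    rw [Fin.cases_succ, hl]
  · intro i
    induction i using Fin.cases with
    | zero =>
      show Fin.cases (motive := fun _ => α) x s ((0 : Fin (t + 1)).succ) ⋖ Fin.cases x s ((0 : Fin (t + 1)).castSucc)
      rw [Fin.cases_succ, Fin.castSucc_zero, Fin.cases_zero, h0]
      exact hx
    | succ j =>
      show Fin.cases (motive := fun _ => α) x s (j.succ.succ) ⋖ Fin.cases x s (j.succ.castSucc)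
      rw [← Fin.succ_castSucc, Fin.cases_succ, Fin.cases_succ]
      exact hc j

theorem covChain_append {a b : ℕ} {x y z : α} (h1 : CovChain a x y) (h2 : CovChain b y z) :
    CovChain (a + b) x z := by
  induction a generalizing x with
  | zero =>
    rw [covChain_zero_iff] at h1
    rw [Nat.zero_add, h1]; exact h2
  | succ n ih =>
    obtain ⟨x', hx, h1'⟩ := covChain_tail h1
    have := covChain_cons hx (ih h1')
    rwa [Nat.succ_add]

theorem covChain_map {f : α → β} (hf : ∀ a b : α, a ⋖ b → f a ⋖ f b ∨ f a = f b)
    {t : ℕ} {x y : α} (h : CovChain t x y) :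
    ∃ t' ≤ t, CovChain t' (f x) (f y) := by
  induction t generalizing x with
  | zero =>
    rw [covChain_zero_iff] at h
    exact ⟨0, le_refl 0, by rw [covChain_zero_iff, h]⟩
  | succ n ih =>
    obtain ⟨x', hx, h'⟩ := covChain_tail h
    obtain ⟨t', ht', hc⟩ := ih h'
    rcases hf x' x hx with hcov | heq
    · exact ⟨t' + 1, Nat.succ_le_succ ht', covChain_cons hcov hc⟩
    · exact ⟨t', ht'.trans (Nat.le_succ n), by rwa [heq] at hc⟩

/-- In a finite group, there exists a covering chain from any subgroup to `⊥`. -/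
theorem exists_covChain_bot {G : Type*} [Group G] [Finite G] (x : Subgroup G) :
    ∃ t, CovChain t x (⊥ : Subgroup G) := by
  induction x using WellFoundedLT.induction with
  | ind x ih =>
    rcases eq_or_ne x ⊥ with rfl | hx
    · exact ⟨0, covChain_zero_iff.mpr rfl⟩
    · have hlt : (⊥ : Subgroup G) < x := bot_lt_iff_ne_bot.mpr hx
      obtain ⟨y, -, hy⟩ := exists_le_covBy_of_lt hlt
      obtain ⟨t, ht⟩ := ih y hy.lt
      exact ⟨t + 1, covChain_cons hy ht⟩

theorem isUnrefinableChain_iff_covChain {G : Type*} [Group G] {t : ℕ} :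
    (∃ s : Fin (t + 1) → Subgroup G, IsUnrefinableChain s) ↔
      CovChain t (⊤ : Subgroup G) (⊥ : Subgroup G) := Iff.rfl

end DepthAux

open DepthAux

section GroupLemmas

variable {G : Type*} [Group G] (N : Subgroup G) [N.Normal]

theorem map_quotient_covBy_or_eq {a b : Subgroup G} (hab : a ⋖ b) :
    a.map (QuotientGroup.mk' N) ⋖ b.map (QuotientGroup.mk' N) ∨
      a.map (QuotientGroup.mk' N) = b.map (QuotientGroup.mk' N) := by
  set π := QuotientGroup.mk' N with hπdef
  have hπ : Function.Surjective π := QuotientGroup.mk'_surjective N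
  have hle : a.map π ≤ b.map π := Subgroup.map_mono hab.le
  rcases eq_or_ne (a.map π) (b.map π) with heq | hne
  · exact Or.inr heq
  refine Or.inl ⟨lt_of_le_of_ne hle hne, ?_⟩
  intro M hM1 hM2
  set K := M.comap π with hKdef
  have haK : a ≤ K := le_trans (Subgroup.le_comap_map π a) (Subgroup.comap_mono hM1.le)
  rcases eq_or_lt_of_le (le_inf haK hab.le) with heq2 | hlt
  · -- a = K ⊓ b, then M ≤ a.map π, contradicting hM1
    have hMa : M ≤ a.map π := by
      intro m hm
      obtain ⟨g, hg, rfl⟩ := hM2.le hm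
      have hgK : g ∈ K := hm
      have hga : g ∈ a := by rw [heq2]; exact ⟨hgK, hg⟩
      exact ⟨g, hga, rfl⟩
    exact absurd hM1 (not_lt_of_ge hMa)
  · -- a < K ⊓ b ≤ b, so K ⊓ b = b by hab, then b.map π ≤ M, contradicting hM2
    have hb : K ⊓ b = b := eq_of_le_of_not_lt inf_le_right (hab.2 hlt)
    have hbK : b ≤ K := hb ▸ inf_le_left
    have : b.map π ≤ M := by
      calc b.map π ≤ K.map π := Subgroup.map_mono hbK
        _ = M := by
          rw [Subgroup.map_comap_eq, MonoidHom.range_eq_top_of_surjective π hπ, top_inf_eq]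
    exact absurd hM2 (not_lt_of_ge this)

theorem comap_quotient_covBy {a b : Subgroup (G ⧸ N)} (hab : a ⋖ b) :
    a.comap (QuotientGroup.mk' N) ⋖ b.comap (QuotientGroup.mk' N) := by
  set π := QuotientGroup.mk' N with hπdef
  have hπ : Function.Surjective π := QuotientGroup.mk'_surjective N
  have hinj : Function.Injective (Subgroup.comap π : Subgroup (G ⧸ N) → Subgroup G) :=
    Subgroup.comap_injective hπ
  have hmapcomap : ∀ H : Subgroup (G ⧸ N), (H.comap π).map π = H := by
    intro H
    rw [Subgroup.map_comap_eq, MonoidHom.range_eq_top_of_surjective π hπ, top_inf_eq]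
  constructor
  · exact lt_of_le_of_ne (Subgroup.comap_mono hab.le) (fun h => hab.lt.ne (hinj h))
  · intro M h1 h2
    have hkerM : π.ker ≤ M := le_trans (Subgroup.ker_le_comap π a) h1.le
    have hcm : (M.map π).comap π = M := by
      rw [Subgroup.comap_map_eq, sup_of_le_left hkerM]
    refine hab.2 (c := M.map π) ?_ ?_
    · refine lt_of_le_of_ne ?_ fun heq => h1.ne' ?_
      · have := Subgroup.map_mono (f := π) h1.le
        rwa [hmapcomap] at this
      · rw [← hcm, heq]
    · refine lt_of_le_of_ne ?_ fun heq => h2.ne ?_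
      · have := Subgroup.map_mono (f := π) h2.le
        rwa [hmapcomap] at this
      · rw [← hcm, heq]

omit [N.Normal] in
theorem map_subtype_covBy {a b : Subgroup N} (hab : a ⋖ b) :
    a.map N.subtype ⋖ b.map N.subtype := by
  have hinj : Function.Injective N.subtype := N.subtype_injective
  have hminj : Function.Injective (Subgroup.map N.subtype : Subgroup N → Subgroup G) :=
    Subgroup.map_injective hinj
  have hmc : ∀ H : Subgroup N, (H.map N.subtype).comap N.subtype = H := fun H =>
    Subgroup.comap_map_eq_self_of_injective hinj H
  constructor
  · exact lt_of_le_of_ne (Subgroup.map_mono hab.le) (fun h => hab.lt.ne (hminj h))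
  · intro M h1 h2
    have hMN : M ≤ N := le_trans h2.le (Subgroup.map_subtype_le _)
    have hmcM : (M.comap N.subtype).map N.subtype = M := by
      rw [Subgroup.map_comap_eq, N.range_subtype, inf_of_le_right hMN]
    refine hab.2 (c := M.comap N.subtype) ?_ ?_
    · refine lt_of_le_of_ne ?_ fun heq => h1.ne' ?_
      · have := Subgroup.comap_mono (f := N.subtype) h1.le
        rwa [hmc] at this
      · rw [← hmcM, ← heq]
    · refine lt_of_le_of_ne ?_ fun heq => h2.ne ?_
      · have := Subgroup.comap_mono (f := N.subtype) h2.le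
        rwa [hmc] at this
      · rw [← hmcM, ← heq]

end GroupLemmas

theorem depth_quotient_le_depth_le_add (G : Type*) [Group G] [Finite G]
    (N : Subgroup G) [N.Normal] :
    groupDepth (G ⧸ N) ≤ groupDepth G ∧
      groupDepth G ≤ groupDepth (G ⧸ N) + groupDepth ↥N := by
  have hGne : (Set.Nonempty {t | ∃ s : Fin (t + 1) → Subgroup G, IsUnrefinableChain s}) := by
    obtain ⟨t, ht⟩ := exists_covChain_bot (⊤ : Subgroup G)
    exact ⟨t, ht⟩
  have hG : CovChain (groupDepth G) (⊤ : Subgroup G) (⊥ : Subgroup G) :=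
    Nat.sInf_mem hGne
  have hQne : (Set.Nonempty {t | ∃ s : Fin (t + 1) → Subgroup (G ⧸ N), IsUnrefinableChain s}) := by
    obtain ⟨t, ht⟩ := exists_covChain_bot (⊤ : Subgroup (G ⧸ N))
    exact ⟨t, ht⟩
  have hQ : CovChain (groupDepth (G ⧸ N)) (⊤ : Subgroup (G ⧸ N)) (⊥ : Subgroup (G ⧸ N)) :=
    Nat.sInf_mem hQne
  have hNne : (Set.Nonempty {t | ∃ s : Fin (t + 1) → Subgroup N, IsUnrefinableChain s}) := by
    obtain ⟨t, ht⟩ := exists_covChain_bot (⊤ : Subgroup N)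
    exact ⟨t, ht⟩
  have hN : CovChain (groupDepth ↥N) (⊤ : Subgroup N) (⊥ : Subgroup N) :=
    Nat.sInf_mem hNne
  constructor
  · -- λ(G/N) ≤ λ(G)
    obtain ⟨t', ht', hc⟩ := covChain_map (f := fun H : Subgroup G => H.map (QuotientGroup.mk' N))
      (fun a b h => map_quotient_covBy_or_eq N h) hG
    have htop : (⊤ : Subgroup G).map (QuotientGroup.mk' N) = ⊤ := by
      rw [← MonoidHom.range_eq_map, MonoidHom.range_eq_top_of_surjective _
        (QuotientGroup.mk'_surjective N)]
    have hbot : (⊥ : Subgroup G).map (QuotientGroup.mk' N) = ⊥ := Subgroup.map_bot _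
    rw [htop, hbot] at hc
    exact le_trans (Nat.sInf_le hc) ht'
  · -- λ(G) ≤ λ(G/N) + λ(N)
    -- pull back chain in G/N to a chain from ⊤ to N in G
    obtain ⟨t1, ht1, hc1⟩ := covChain_map
      (f := fun H : Subgroup (G ⧸ N) => H.comap (QuotientGroup.mk' N))
      (fun a b h => Or.inl (comap_quotient_covBy N h)) hQ
    have htop1 : (⊤ : Subgroup (G ⧸ N)).comap (QuotientGroup.mk' N) = ⊤ := Subgroup.comap_top _
    have hbot1 : (⊥ : Subgroup (G ⧸ N)).comap (QuotientGroup.mk' N) = N := by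
      rw [MonoidHom.comap_bot (QuotientGroup.mk' N), QuotientGroup.ker_mk']
    rw [htop1, hbot1] at hc1
    -- push chain in N to a chain from N to ⊥ in G
    obtain ⟨t2, ht2, hc2⟩ := covChain_map (f := fun H : Subgroup N => H.map N.subtype)
      (fun a b h => Or.inl (map_subtype_covBy N h)) hN
    have htop2 : (⊤ : Subgroup N).map N.subtype = N := by
      rw [← MonoidHom.range_eq_map, N.range_subtype]
    have hbot2 : (⊥ : Subgroup N).map N.subtype = ⊥ := Subgroup.map_bot _
    rw [htop2, hbot2] at hc2
    have := covChain_append hc1 hc2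
    exact le_trans (Nat.sInf_le this) (Nat.add_le_add ht1 ht2)
end

section
/- Suppose a finite group G has depth 2 and M is a maximal subgroup of G of prime order. Then either M is normal in G, or there is a normal subgroup N of G with G = NM and M acting fixed-point-freely on N by conjugation (i.e., G is a Frobenius group NM). -/
theorem normal_or_frobenius_of_depth_two (G : Type*) [Group G] [Finite G]
    (hdepth : groupDepth G = 2) (M : Subgroup G) (hM : M ⋖ ⊤)
    (hp : (Nat.card M).Prime) :
    M.Normal ∨
      ∃ N : Subgroup G, N.Normal ∧ N ⊔ M = ⊤ ∧
        ∀ m ∈ M, m ≠ 1 → ∀ n ∈ N, m * n * m⁻¹ = n → n = 1 := by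
  by_cases hnorm : M.Normal
  · exact Or.inl hnorm
  right
  haveI hfact : Fact (Nat.card M).Prime := ⟨hp⟩
  -- M is cyclic, hence commutative
  haveI hcyc : IsCyclic M := isCyclic_of_prime_card (p := Nat.card M) rfl
  have hcomm : ∀ x y : G, x ∈ M → y ∈ M → x * y = y * x := by
    intro x y hx hy
    letI : CommGroup M := IsCyclic.commGroup
    have := mul_comm (⟨x, hx⟩ : M) ⟨y, hy⟩
    simpa [Subtype.ext_iff] using this
  -- M is a p-group
  have hMp : IsPGroup (Nat.card M) M := IsPGroup.of_card (by rw [pow_one])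
  obtain ⟨P, hMP⟩ := hMp.exists_le_sylow
  -- P = M (G is not a p-group, else M would be normal)
  have hPM : (P : Subgroup G) = M := by
    rcases hM.eq_or_eq hMP le_top with h | h
    · exact h
    · exfalso
      have hG : IsPGroup (Nat.card M) G := by
        have h2 : IsPGroup (Nat.card M) (⊤ : Subgroup G) := h ▸ P.2
        exact h2.of_equiv Subgroup.topEquiv
      haveI := hG.isNilpotent
      have hnc := normalizerCondition_of_isNilpotent (G := G)
      have hlt := hnc M hM.lt
      rcases hM.eq_or_eq Subgroup.le_normalizer le_top with h2 | h2
      · exact absurd h2.symm (ne_of_lt hlt)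
      · exact hnorm (Subgroup.normalizer_eq_top_iff.mp h2)
  -- M is self-normalizing
  have hnorm_eq : Subgroup.normalizer (M : Set G) = M := by
    rcases hM.eq_or_eq Subgroup.le_normalizer le_top with h | h
    · exact h
    · exact absurd (Subgroup.normalizer_eq_top_iff.mp h) hnorm
  -- Burnside's hypothesis
  have hcent : Subgroup.normalizer ((P : Subgroup G) : Set G) ≤ Subgroup.centralizer (P : Set G) := by
    intro g hg
    rw [hPM] at hg
    rw [hnorm_eq] at hg
    rw [Subgroup.mem_centralizer_iff]
    intro h hh
    have hh' : h ∈ (P : Subgroup G) := hh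
    rw [hPM] at hh'
    exact hcomm h g hh' hg
  have hcompl := MonoidHom.ker_transferSylow_isComplement' P hcent
  set N := (MonoidHom.transferSylow P hcent).ker with hN
  refine ⟨N, MonoidHom.normal_ker _, ?_, ?_⟩
  · have := hcompl.sup_eq_top
    rwa [hPM] at this
  · intro m hm hm1 n hn hfix
    -- n centralizes m
    have hnm : m * n = n * m := mul_inv_eq_iff_eq_mul.mp hfix
    -- centralizer of {m}
    have hMC : M ≤ Subgroup.centralizer {m} := by
      intro g hg
      rw [Subgroup.mem_centralizer_iff]
      intro h hh
      rw [Set.mem_singleton_iff] at hh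
      rw [hh]
      exact hcomm m g hm hg
    rcases hM.eq_or_eq hMC le_top with hC | hC
    · -- centralizer {m} = M, so n ∈ M ∩ N = 1
      have hnM : n ∈ M := by
        rw [← hC]
        rw [Subgroup.mem_centralizer_iff]
        intro h hh
        rw [Set.mem_singleton_iff] at hh
        rw [hh]
        exact hnm
      have hdisj := hcompl.disjoint
      rw [hPM] at hdisj
      exact Subgroup.disjoint_def.mp hdisj hn hnM
    · -- centralizer {m} = ⊤, so m is central, so M = ⟨m⟩ is normal: contradiction
      exfalso
      have hmz : m ∈ Subgroup.center G := by
        rw [Subgroup.mem_center_iff]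
        intro g
        have hg : g ∈ Subgroup.centralizer {m} := hC ▸ Subgroup.mem_top g
        rw [Subgroup.mem_centralizer_iff] at hg
        exact (hg m rfl).symm
      -- zpowers m = M
      have hz_le : Subgroup.zpowers m ≤ M := by
        rw [Subgroup.zpowers_le]; exact hm
      have hord : orderOf m = Nat.card M := by
        have hdvd : orderOf m ∣ Nat.card M := by
          have : orderOf (⟨m, hm⟩ : M) ∣ Nat.card M := orderOf_dvd_natCard _
          rwa [Subgroup.orderOf_mk] at this
        rcases (Nat.Prime.eq_one_or_self_of_dvd hp _ hdvd) with h1 | h1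
        · exact absurd (orderOf_eq_one_iff.mp h1) hm1
        · exact h1
      have hzM : Subgroup.zpowers m = M := by
        apply Subgroup.eq_of_le_of_card_ge hz_le
        rw [Nat.card_zpowers, hord]
      apply hnorm
      constructor
      intro x hx g
      rw [← hzM] at hx
      obtain ⟨k, hk⟩ := hx
      have hxz : x ∈ Subgroup.center G := by
        rw [← hk]
        exact Subgroup.zpow_mem _ hmz k
      rw [Subgroup.mem_center_iff] at hxz
      rw [hxz g, mul_assoc, mul_inv_cancel, mul_one]
      exact hz_le ⟨k, hk⟩
end

section
/- If G is a finite supersolvable group, then λ(G) = l(G); that is, every unrefinable chain of subgroups from G to 1 has the same length. In particular, for a supersolvable group G, every maximal subgroup has prime index and λ(G) = Ω(|G|). -/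
/-- A group is supersolvable if it has a chain of normal subgroups from the trivial
subgroup to the whole group in which each successive quotient is cyclic (i.e. each term
is generated by the previous term together with one further element). -/
def IsSupersolvable (G : Type*) [Group G] : Prop :=
  ∃ (n : ℕ) (s : Fin (n + 1) → Subgroup G), s 0 = ⊥ ∧ s (Fin.last n) = ⊤ ∧
    (∀ i, (s i).Normal) ∧
    ∀ i : Fin n, s i.castSucc ≤ s i.succ ∧
      ∃ g : G, s i.succ = s i.castSucc ⊔ Subgroup.zpowers g

section Aux

open Subgroup

lemma Omega_mul {a b : ℕ} (ha : a ≠ 0) (hb : b ≠ 0) : Omega (a * b) = Omega a + Omega b := by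
  unfold Omega
  rw [← List.length_append]
  exact (Nat.perm_primeFactorsList_mul ha hb).length_eq

lemma Omega_prime {p : ℕ} (hp : p.Prime) : Omega p = 1 := by
  unfold Omega
  rw [Nat.primeFactorsList_prime hp]
  rfl

lemma Omega_one : Omega 1 = 0 := by
  unfold Omega
  rw [Nat.primeFactorsList_one]
  rfl

lemma Omega_pos {r : ℕ} (h0 : r ≠ 0) (h1 : r ≠ 1) : 0 < Omega r := by
  unfold Omega
  rcases Nat.pos_of_ne_zero (fun h : r.primeFactorsList.length = 0 => by
    rcases (Nat.primeFactorsList_eq_nil r).mp (List.length_eq_zero_iff.mp h) with h' | h' <;>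
      simp_all) with h
  exact h

instance zpowersIsCyclic {G : Type*} [Group G] (g : G) : IsCyclic (Subgroup.zpowers g) := by
  refine ⟨⟨⟨g, Subgroup.mem_zpowers g⟩, fun x => ?_⟩⟩
  obtain ⟨k, hk⟩ := Subgroup.mem_zpowers_iff.mp x.2
  exact Subgroup.mem_zpowers_iff.mpr ⟨k, Subtype.ext (by simpa using hk)⟩

variable {G : Type*} [Group G]

/-- Subgroups of supersolvable groups are supersolvable. -/
theorem isSupersolvable_subgroup (hss : IsSupersolvable G) (H : Subgroup G) :
    IsSupersolvable H := by
  obtain ⟨n, s, h0, hl, hnorm, hstep⟩ := hss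
  refine ⟨n, fun i => (s i).subgroupOf H,
    by show (s 0).subgroupOf H = ⊥; rw [h0, Subgroup.bot_subgroupOf],
    by show (s (Fin.last n)).subgroupOf H = ⊤; rw [hl, Subgroup.top_subgroupOf], fun i => by
      haveI := hnorm i; infer_instance, fun i => ?_⟩
  obtain ⟨hle, g, hg⟩ := hstep i
  haveI := hnorm i.castSucc
  set A := s i.castSucc with hA
  set B := s i.succ with hB
  refine ⟨Subgroup.comap_mono hle, ?_⟩
  set π := QuotientGroup.mk' A with hπ
  set φ := π.comp H.subtype with hφ
  set Q := (B.subgroupOf H).map φ with hQdef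
  have hmapA : A.map π = ⊥ := (Subgroup.map_eq_bot_iff A).mpr (by rw [QuotientGroup.ker_mk'])
  have hmapB : B.map π = Subgroup.zpowers (π g) := by
    rw [hg, Subgroup.map_sup, MonoidHom.map_zpowers, hmapA, bot_sup_eq]
  have hQle : Q ≤ Subgroup.zpowers (π g) := by
    rintro _ ⟨x, hx, rfl⟩
    rw [← hmapB]
    exact Subgroup.mem_map_of_mem π hx
  haveI : IsCyclic Q := Subgroup.isCyclic_of_le hQle
  obtain ⟨q, hq⟩ := IsCyclic.exists_generator (α := Q)
  obtain ⟨h, hh, hφh⟩ := Subgroup.mem_map.mp q.2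
  refine ⟨h, le_antisymm (fun x hx => ?_)
    (sup_le (Subgroup.comap_mono hle) (Subgroup.zpowers_le.mpr hh))⟩
  have hxQ : φ x ∈ Q := Subgroup.mem_map_of_mem φ hx
  obtain ⟨m, hm⟩ := Subgroup.mem_zpowers_iff.mp (hq ⟨φ x, hxQ⟩)
  have hm' : φ (h ^ m) = φ x := by
    have := congrArg (Subtype.val) hm
    simpa [hφh, map_zpow] using this
  have hmem : ((h : G) ^ m)⁻¹ * (x : G) ∈ A := by
    have : π (((h : G) ^ m)⁻¹ * (x : G)) = 1 := by
      have hφ1 : π ((h : G) ^ m) = π (x : G) := hm'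
      rw [map_mul, map_inv, hφ1, inv_mul_cancel]
    exact (QuotientGroup.eq_one_iff _).mp this
  have hmem' : (h ^ m)⁻¹ * x ∈ A.subgroupOf H := by
    simpa [Subgroup.mem_subgroupOf] using hmem
  have hx2 : x = h ^ m * ((h ^ m)⁻¹ * x) := by group
  rw [hx2]
  exact mul_mem (Subgroup.mem_sup_right (Subgroup.mem_zpowers_iff.mpr ⟨m, rfl⟩))
    (Subgroup.mem_sup_left hmem')

/-- In a finite supersolvable group, every maximal subgroup has prime index. -/
theorem index_prime_of_coatom [Finite G] (hss : IsSupersolvable G)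
    {M : Subgroup G} (hM : M ⋖ ⊤) : M.index.Prime := by
  obtain ⟨n, s, h0, hl, hnorm, hstep⟩ := hss
  have hMne : M ≠ ⊤ := hM.1.ne
  -- find the transition step of the normal series across `M`
  have hex : ∃ j : Fin n, s j.castSucc ≤ M ∧ ¬ s j.succ ≤ M := by
    by_contra hcon
    push_neg at hcon
    have hall : ∀ i : Fin (n + 1), s i ≤ M := by
      intro i
      induction i using Fin.induction with
      | zero => rw [h0]; exact bot_le
      | succ j ih => exact hcon j ih
    have := hall (Fin.last n)
    rw [hl] at this
    exact hMne (top_le_iff.mp this)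
  obtain ⟨j, hAM, hBM⟩ := hex
  obtain ⟨hAB, g, hBg⟩ := hstep j
  haveI nA := hnorm j.castSucc
  haveI nB := hnorm j.succ
  set A := s j.castSucc with hA
  set B := s j.succ with hB
  have hsup : M ⊔ B = ⊤ := by
    have h1 : M < M ⊔ B :=
      lt_of_le_of_ne le_sup_left (fun he => hBM (he ▸ le_sup_right))
    exact ((le_top : M ⊔ B ≤ ⊤).lt_or_eq).resolve_left (hM.2 h1)
  set N := M ⊓ B with hNdef
  have hAN : A ≤ N := le_inf hAM hAB
  have hNM : N ≤ M := inf_le_left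
  have hNB : N ≤ B := inf_le_right
  -- commutators of elements of B lie in A
  have hcomm : ∀ b ∈ B, ∀ x ∈ B, b * x * b⁻¹ * x⁻¹ ∈ A := by
    intro b hb x hx
    set πA := QuotientGroup.mk' A with hπA
    have hmapA : A.map πA = ⊥ := (Subgroup.map_eq_bot_iff A).mpr (by rw [QuotientGroup.ker_mk'])
    have hmapB : B.map πA = Subgroup.zpowers (πA g) := by
      rw [hBg, Subgroup.map_sup, MonoidHom.map_zpowers, hmapA, bot_sup_eq]
    obtain ⟨k, hk⟩ := Subgroup.mem_zpowers_iff.mp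
      (hmapB ▸ Subgroup.mem_map_of_mem πA hb)
    obtain ⟨l, hl'⟩ := Subgroup.mem_zpowers_iff.mp
      (hmapB ▸ Subgroup.mem_map_of_mem πA hx)
    have : πA (b * x * b⁻¹ * x⁻¹) = 1 := by
      rw [map_mul, map_mul, map_mul, map_inv, map_inv, ← hk, ← hl']
      group
    exact (QuotientGroup.eq_one_iff _).mp this
  -- N is normal in G
  have key : ∀ y, (y ∈ M ∨ y ∈ B) → ∀ x ∈ N, y * x * y⁻¹ ∈ N := by
    rintro y (hy | hy) x hx
    · exact Subgroup.mem_inf.mpr ⟨mul_mem (mul_mem hy (Subgroup.mem_inf.mp hx).1)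
        (inv_mem hy), nB.conj_mem x (Subgroup.mem_inf.mp hx).2 y⟩
    · refine Subgroup.mem_inf.mpr ⟨?_, nB.conj_mem x (Subgroup.mem_inf.mp hx).2 y⟩
      have hc : y * x * y⁻¹ * x⁻¹ ∈ A := hcomm y hy x (Subgroup.mem_inf.mp hx).2
      have h2 := mul_mem (hAM hc) (Subgroup.mem_inf.mp hx).1
      have h3 : y * x * y⁻¹ * x⁻¹ * x = y * x * y⁻¹ := by group
      rwa [h3] at h2
  have norm_of : ∀ y, (y ∈ M ∨ y ∈ B) → y ∈ Subgroup.normalizer (N : Set G) := by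
    intro y hy
    rw [Subgroup.mem_normalizer_iff]
    intro x
    refine ⟨fun hx => key y hy x hx, fun hx => ?_⟩
    have h2 := key y⁻¹ (hy.imp inv_mem inv_mem) _ hx
    have h3 : y⁻¹ * (y * x * y⁻¹) * y⁻¹⁻¹ = x := by group
    rwa [h3] at h2
  have hN : N.Normal := by
    rw [← Subgroup.normalizer_eq_top_iff, eq_top_iff, ← hsup, sup_le_iff]
    exact ⟨fun m hm => norm_of m (Or.inl hm), fun b hb => norm_of b (Or.inr hb)⟩
  haveI := hN
  -- pass to the quotient by N
  set π := QuotientGroup.mk' N with hπ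
  have hsurj : Function.Surjective π := QuotientGroup.mk'_surjective N
  have hker : π.ker = N := QuotientGroup.ker_mk' N
  have hidx : (M.map π).index = M.index :=
    Subgroup.index_map_eq (f := π) (H := M) hsurj (by rw [hker]; exact hNM)
  set gq := π g with hgq
  set Mb := M.map π with hMb
  set C := Subgroup.zpowers gq with hC
  have hgB : g ∈ B := hBg ▸ Subgroup.mem_sup_right (Subgroup.mem_zpowers g)
  have hmapA : A.map π = ⊥ := (Subgroup.map_eq_bot_iff A).mpr (by rw [hker]; exact hAN)
  have hmapB : B.map π = C := by
    rw [hBg, Subgroup.map_sup, MonoidHom.map_zpowers, hmapA, bot_sup_eq]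
  have hCn : C.Normal := hmapB ▸ nB.map π hsurj
  have hsupb : Mb ⊔ C = ⊤ := by
    rw [← hmapB, ← Subgroup.map_sup, hsup, Subgroup.map_top_of_surjective π hsurj]
  have hdisj : Disjoint Mb C := by
    rw [disjoint_iff, eq_bot_iff]
    intro x hx
    obtain ⟨hxM, hxC⟩ := Subgroup.mem_inf.mp hx
    obtain ⟨m, hm, rfl⟩ := hxM
    obtain ⟨k, hk⟩ := Subgroup.mem_zpowers_iff.mp hxC
    have hπk : π (g ^ k) = π m := by rw [map_zpow]; exact hk
    have hmem : m⁻¹ * g ^ k ∈ N := by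
      have : π (m⁻¹ * g ^ k) = 1 := by rw [map_mul, map_inv, hπk, inv_mul_cancel]
      rw [← hker]; exact this
    have hgkM : g ^ k ∈ M := by
      have : g ^ k = m * (m⁻¹ * g ^ k) := by group
      rw [this]; exact mul_mem hm (hNM hmem)
    have hgkN : g ^ k ∈ N := Subgroup.mem_inf.mpr ⟨hgkM, B.zpow_mem hgB k⟩
    have : π m = 1 := by
      rw [← hπk]
      exact (QuotientGroup.eq_one_iff _).mpr hgkN
    simpa [Subgroup.mem_bot] using this
  have hcompl : Subgroup.IsComplement' Mb C :=
    Subgroup.isComplement'_of_disjoint_and_mul_eq_univ hdisj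
      (by rw [← Subgroup.mul_normal Mb C, hsupb, Subgroup.coe_top])
  have hq : M.index = orderOf gq := by
    rw [← hidx, hcompl.symm.index_eq_card, Nat.card_zpowers]
  have hq1 : M.index ≠ 1 := fun h => hMne (Subgroup.index_eq_one.mp h)
  have hq0 : M.index ≠ 0 := Subgroup.index_ne_zero_of_finite
  set p := M.index.minFac with hp_def
  have hp : p.Prime := Nat.minFac_prime hq1
  have hpd : p ∣ M.index := Nat.minFac_dvd _
  set c := gq ^ p with hc
  have hcC : c ∈ C := C.pow_mem (Subgroup.mem_zpowers gq) p
  -- zpowers c is normal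
  have hconj : ∀ y, y * c * y⁻¹ ∈ Subgroup.zpowers c := by
    intro y
    obtain ⟨k, hk⟩ := Subgroup.mem_zpowers_iff.mp
      (hCn.conj_mem gq (Subgroup.mem_zpowers gq) y)
    refine Subgroup.mem_zpowers_iff.mpr ⟨k, ?_⟩
    rw [hc, ← conj_pow, ← hk, ← zpow_natCast, ← zpow_natCast (gq ^ k), ← zpow_mul, ← zpow_mul,
      mul_comm]
  have hcn : (Subgroup.zpowers c).Normal := by
    constructor
    intro x hx y
    obtain ⟨m, hm⟩ := Subgroup.mem_zpowers_iff.mp hx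
    have h1 : y * x * y⁻¹ = (y * c * y⁻¹) ^ m := by rw [conj_zpow, hm]
    rw [h1]
    exact Subgroup.zpow_mem _ (hconj y) m
  -- consider M̄ ⊔ ⟨c⟩ pulled back to G
  set E := Subgroup.comap π (Mb ⊔ Subgroup.zpowers c) with hE
  have hME : M ≤ E := fun m hm =>
    Subgroup.mem_comap.mpr (Subgroup.mem_sup_left (Subgroup.mem_map_of_mem π hm))
  have hmapE : (Mb ⊔ Subgroup.zpowers c) = E.map π :=
    (Subgroup.map_comap_eq_self_of_surjective hsurj _).symm
  rcases eq_or_ne M E with heq | hne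
  · -- then c ∈ Mb, hence c = 1, hence the index is prime
    have hcMb : c ∈ Mb := by
      have h1 : c ∈ Mb ⊔ Subgroup.zpowers c :=
        Subgroup.mem_sup_right (Subgroup.mem_zpowers c)
      rw [hmapE, ← heq] at h1
      exact h1
    have hc1 : c = 1 := by
      have := hdisj.le_bot (Subgroup.mem_inf.mpr ⟨hcMb, hcC⟩)
      simpa [Subgroup.mem_bot] using this
    have hdvd : orderOf gq ∣ p := orderOf_dvd_of_pow_eq_one hc1
    have : p = M.index := Nat.dvd_antisymm hpd (hq ▸ hdvd)
    rwa [← this]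
  · -- impossible: E = ⊤ leads to a contradiction on indices
    exfalso
    have hlt : M < E := lt_of_le_of_ne hME hne
    have hEtop : E = ⊤ := ((le_top : E ≤ ⊤).lt_or_eq).resolve_left (hM.2 hlt)
    have hsupc : Mb ⊔ Subgroup.zpowers c = ⊤ := by
      rw [hmapE, hEtop, Subgroup.map_top_of_surjective π hsurj]
    have hdisj' : Disjoint Mb (Subgroup.zpowers c) :=
      hdisj.mono_right (Subgroup.zpowers_le.mpr hcC)
    haveI := hcn
    have hcompl' : Subgroup.IsComplement' Mb (Subgroup.zpowers c) :=
      Subgroup.isComplement'_of_disjoint_and_mul_eq_univ hdisj'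
        (by rw [← Subgroup.mul_normal Mb (Subgroup.zpowers c), hsupc, Subgroup.coe_top])
    have hq' : M.index = orderOf c := by
      rw [← hidx, hcompl'.symm.index_eq_card, Nat.card_zpowers]
    have hoc : orderOf c = orderOf gq / p := by
      rw [hc, orderOf_pow gq, Nat.gcd_eq_right (hq ▸ hpd)]
    have hlt' : orderOf gq / p < orderOf gq :=
      Nat.div_lt_self (Nat.pos_of_ne_zero (hq ▸ hq0)) hp.one_lt
    have hqq : orderOf gq = orderOf gq / p := by conv_lhs => rw [← hq, hq', hoc]
    exact absurd hqq (ne_of_gt hlt')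

/-- A covering pair of subgroups gives a maximal subgroup of the larger one. -/
theorem covby_subgroupOf {H K : Subgroup G} (h : H ⋖ K) :
    H.subgroupOf K ⋖ ⊤ := by
  have hle : H ≤ K := h.le
  constructor
  · refine lt_top_iff_ne_top.mpr fun ht => h.lt.ne ?_
    exact le_antisymm hle (Subgroup.subgroupOf_eq_top.mp ht)
  · intro C' hlt hC'top
    set C := C'.map K.subtype with hCdef
    have h1 : (H.subgroupOf K).map K.subtype = H := by
      rw [Subgroup.subgroupOf_map_subtype, inf_of_le_left hle]
    have hHC : H < C := by
      rw [← h1]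
      exact lt_of_le_of_ne (Subgroup.map_mono hlt.le)
        (fun he => hlt.ne (Subgroup.map_injective K.subtype_injective he))
    have hCK : C ≤ K := Subgroup.map_subtype_le C'
    have hCKeq : C = K := (hCK.lt_or_eq).resolve_left (h.2 hHC)
    apply hC'top.ne
    apply Subgroup.map_injective K.subtype_injective
    rw [← hCdef, hCKeq, ← MonoidHom.range_eq_map, Subgroup.range_subtype]

theorem omega_covby [Finite G] (hss : IsSupersolvable G) {H K : Subgroup G}
    (h : H ⋖ K) : Omega (Nat.card K) = Omega (Nat.card H) + 1 := by
  have hle : H ≤ K := h.le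
  have hcov := covby_subgroupOf h
  have hp : (H.subgroupOf K).index.Prime :=
    index_prime_of_coatom (isSupersolvable_subgroup hss K) hcov
  have hcard : Nat.card (H.subgroupOf K) * (H.subgroupOf K).index = Nat.card K :=
    Subgroup.card_mul_index _
  have he : Nat.card (H.subgroupOf K) = Nat.card H :=
    Nat.card_congr (Subgroup.subgroupOfEquivOfLe hle).toEquiv
  rw [← hcard, he, Omega_mul Nat.card_pos.ne' hp.ne_zero, Omega_prime hp]

theorem omega_lt_of_lt [Finite G] {H K : Subgroup G} (h : H < K) :
    Omega (Nat.card H) < Omega (Nat.card K) := by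
  have hle : H ≤ K := h.le
  have hcard : Nat.card (H.subgroupOf K) * (H.subgroupOf K).index = Nat.card K :=
    Subgroup.card_mul_index _
  have he : Nat.card (H.subgroupOf K) = Nat.card H :=
    Nat.card_congr (Subgroup.subgroupOfEquivOfLe hle).toEquiv
  have hr0 : (H.subgroupOf K).index ≠ 0 := Subgroup.index_ne_zero_of_finite
  have hr1 : (H.subgroupOf K).index ≠ 1 := fun h1 =>
    h.ne (le_antisymm hle (Subgroup.subgroupOf_eq_top.mp (Subgroup.index_eq_one.mp h1)))
  calc Omega (Nat.card H) < Omega (Nat.card H) + Omega (H.subgroupOf K).index :=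
        Nat.lt_add_of_pos_right (Omega_pos hr0 hr1)
    _ = Omega (Nat.card K) := by rw [← hcard, he, Omega_mul Nat.card_pos.ne' hr0]

theorem covby_map_subtype {M : Subgroup G} {A B : Subgroup M} (h : A ⋖ B) :
    A.map M.subtype ⋖ B.map M.subtype := by
  constructor
  · exact lt_of_le_of_ne (Subgroup.map_mono h.le)
      (fun he => h.lt.ne (Subgroup.map_injective M.subtype_injective he))
  · intro C hAC hCB
    have hCM : C ≤ M := hCB.le.trans (Subgroup.map_subtype_le B)
    set C' := C.subgroupOf M with hC'def
    have hmapC' : C'.map M.subtype = C := by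
      rw [Subgroup.subgroupOf_map_subtype, inf_of_le_left hCM]
    have h1 : A < C' := by
      refine lt_of_le_of_ne ?_ (fun he => hAC.ne ?_)
      · exact (Subgroup.map_le_map_iff_of_injective M.subtype_injective).mp
          (by rw [hmapC']; exact hAC.le)
      · rw [he, hmapC']
    have h2 : C' < B := by
      refine lt_of_le_of_ne ?_ (fun he => hCB.ne ?_)
      · exact (Subgroup.map_le_map_iff_of_injective M.subtype_injective).mp
          (by rw [hmapC']; exact hCB.le)
      · rw [← hmapC', he]
    exact h.2 h1 h2

theorem exists_unrefinable_aux :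
    ∀ (n : ℕ) (G : Type*) [Group G] [Finite G], Nat.card G ≤ n →
      ∃ (t : ℕ) (s : Fin (t + 1) → Subgroup G), IsUnrefinableChain s := by
  intro n
  induction n with
  | zero =>
    intro G _ _ h
    have := Nat.card_pos (α := G)
    omega
  | succ n ih =>
    intro G _ _ hcard
    by_cases htriv : (⊥ : Subgroup G) = ⊤
    · exact ⟨0, fun _ => ⊤, rfl, htriv.symm, fun i => i.elim0⟩
    · obtain ⟨M, hM⟩ : ∃ M : Subgroup G, IsCoatom M := by
        rcases eq_top_or_exists_le_coatom (⊥ : Subgroup G) with h | ⟨M, hM, _⟩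
        · exact absurd h htriv
        · exact ⟨M, hM⟩
      have hMcov : M ⋖ ⊤ := hM.covBy_top
      have hlt : Nat.card M < Nat.card G := by
        have h1 : (M : Set G) ⊂ Set.univ := by
          refine Set.ssubset_univ_iff.mpr ?_
          rw [Ne, Subgroup.coe_eq_univ]
          exact hM.1
        calc Nat.card M = (M : Set G).ncard := Nat.card_coe_set_eq _
          _ < (Set.univ : Set G).ncard := Set.ncard_lt_ncard h1 Set.finite_univ
          _ = Nat.card G := Set.ncard_univ G
      obtain ⟨t, s', hch⟩ := ih M (by omega)
      obtain ⟨h0, hl, hc⟩ := hch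
      set s'' : Fin (t + 1) → Subgroup G := fun i => (s' i).map M.subtype with hs''
      have hs''0 : s'' 0 = M := by
        rw [hs'']
        simp only [h0]
        rw [← MonoidHom.range_eq_map, Subgroup.range_subtype]
      refine ⟨t + 1, Fin.cons ⊤ s'', by rw [Fin.cons_zero], ?_, ?_⟩
      · rw [show Fin.last (t + 1) = (Fin.last t).succ from (Fin.succ_last t).symm,
          Fin.cons_succ]
        rw [hs'']
        simp only [hl]
        exact Subgroup.map_bot _
      · intro i
        induction i using Fin.cases with
        | zero =>
          rw [show (0 : Fin (t + 1)).castSucc = 0 from rfl, Fin.cons_zero, Fin.cons_succ, hs''0]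
          exact hMcov
        | succ j =>
          rw [Fin.cons_succ, show (Fin.succ j).castSucc = (j.castSucc).succ from
            (Fin.succ_castSucc j).symm, Fin.cons_succ]
          exact covby_map_subtype (hc j)

end Aux

theorem iwasawa_supersolvable (G : Type*) [Group G] [Finite G]
    (hss : IsSupersolvable G) :
    groupDepth G = groupLength G ∧
    (∀ (t : ℕ) (s : Fin (t + 1) → Subgroup G), IsUnrefinableChain s →
      t = Omega (Nat.card G)) ∧
    (∀ M : Subgroup G, M ⋖ ⊤ → M.index.Prime) ∧
    groupDepth G = Omega (Nat.card G) := by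
  set N := Omega (Nat.card G) with hN
  -- every unrefinable chain has length N
  have key : ∀ (t : ℕ) (s : Fin (t + 1) → Subgroup G), IsUnrefinableChain s → t = N := by
    rintro t s ⟨h0, hl, hc⟩
    have main : ∀ i : Fin (t + 1), Omega (Nat.card (s i)) + i.val = N := by
      intro i
      induction i using Fin.induction with
      | zero =>
        have hcT : Nat.card (⊤ : Subgroup G) = Nat.card G := Subgroup.card_top
        rw [h0, hcT]
        simp [hN]
      | succ j ih =>
        have hstep := omega_covby hss (hc j)
        have hv : (j.succ).val = j.castSucc.val + 1 := by simp
        omega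
    have := main (Fin.last t)
    rw [hl] at this
    simp only [Subgroup.card_bot, Omega_one, Fin.val_last, zero_add] at this
    exact this
  obtain ⟨t₀, s₀, hch₀⟩ := exists_unrefinable_aux (Nat.card G) G le_rfl
  have ht₀ : t₀ = N := key _ _ hch₀
  subst ht₀
  -- groupDepth G = N
  have hdepth : groupDepth G = N := by
    have hset : {t | ∃ s : Fin (t + 1) → Subgroup G, IsUnrefinableChain s} = {N} := by
      ext t
      constructor
      · rintro ⟨s, hs⟩
        exact key t s hs
      · rintro rfl
        exact ⟨s₀, hch₀⟩
    rw [groupDepth, hset, csInf_singleton]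
  -- groupLength G = N
  have hlen : groupLength G = N := by
    set T := {t | ∃ s : Fin (t + 1) → Subgroup G,
      s 0 = ⊤ ∧ s (Fin.last t) = ⊥ ∧ ∀ i : Fin t, s i.succ < s i.castSucc} with hT
    have hmem : N ∈ T := by
      obtain ⟨h0, hl, hc⟩ := hch₀
      exact ⟨s₀, h0, hl, fun i => (hc i).lt⟩
    have hub : ∀ t ∈ T, t ≤ N := by
      rintro t ⟨s, h0, hl, hc⟩
      have main : ∀ i : Fin (t + 1), Omega (Nat.card (s i)) + i.val ≤ N := by
        intro i
        induction i using Fin.induction with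
        | zero =>
          have hcT : Nat.card (⊤ : Subgroup G) = Nat.card G := Subgroup.card_top
          rw [h0, hcT]
          simp [hN]
        | succ j ih =>
          have hstep := omega_lt_of_lt (hc j)
          have hv : (j.succ).val = j.castSucc.val + 1 := by simp
          omega
      have := main (Fin.last t)
      rw [hl] at this
      simpa [Subgroup.card_bot, Omega_one] using this
    rw [groupLength]
    exact le_antisymm (csSup_le ⟨N, hmem⟩ hub) (le_csSup ⟨N, hub⟩ hmem)
  exact ⟨hdepth.trans hlen.symm, key, fun M hM => index_prime_of_coatom hss hM, hdepth⟩
end
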